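/- An AB3 abelian category A is equivalent to the category of modules over a ring if and only if A has a self-small projective generator (equivalently, a compact projective generator). -/

import Mathlib

set_option maxHeartbeats 1000000
set_option synthInstance.maxHeartbeats 200000

open CategoryTheory CategoryTheory.Limits DirectSum

open Opposite

universe v u

namespace Paper

variable {C : Type u} [Category.{v} C] [Abelian C]

/-- The canonical map `∐_j Hom(P, A j) → Hom(P, ∐_j A j)`. -/
noncomputable def coprodHomMap (P : C) {J : Type v} [DecidableEq J] (A : J → C)
    [HasCoproduct A] : (DirectSum J (fun j => (P ⟶ A j))) →+ (P ⟶ ∐ A) :=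
  DirectSum.toAddMonoid fun j =>
    AddMonoidHom.mk' (fun f => f ≫ Sigma.ι A j) (fun f g => by
      simp [Preadditive.add_comp])

section Aux

variable (P : C)

lemma coprodHomMap_of {J : Type v} [DecidableEq J] (A : J → C) [HasCoproduct A]
    (j : J) (f : P ⟶ A j) :
    coprodHomMap P A (DirectSum.of _ j f) = f ≫ Sigma.ι A j :=
  DirectSum.toAddMonoid_of _ _ _

lemma coprodHomMap_injective {J : Type v} [DecidableEq J]
    [HasCoproduct (fun _ : J => P)] :
    Function.Injective (coprodHomMap P (fun _ : J => P)) := by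
  have key : ∀ (x : DirectSum J (fun _ : J => (P ⟶ P))) (j : J),
      coprodHomMap P (fun _ : J => P) x ≫
        (Sigma.desc (fun i => if i = j then 𝟙 P else 0)) = x j := by
    intro x j
    have E : (Preadditive.rightComp P
          (Sigma.desc (fun i : J => if i = j then 𝟙 P else 0))).comp
            (coprodHomMap P (fun _ : J => P)) =
        AddMonoidHom.mk' (fun x : DirectSum J (fun _ : J => (P ⟶ P)) => x j)
          (fun a b => DFinsupp.add_apply a b j) := by
      refine DirectSum.addHom_ext (fun i u => ?_)
      simp only [AddMonoidHom.comp_apply, AddMonoidHom.mk'_apply, coprodHomMap_of,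
        Preadditive.rightComp, Category.assoc, colimit.ι_desc]
      by_cases h : i = j
      · subst h
        simp [DirectSum.of_eq_same]
      · simp [h, DirectSum.of_eq_of_ne _ _ _ (Ne.symm h)]
    exact DFunLike.congr_fun E x
  intro x y h
  refine DFinsupp.ext (fun j => ?_)
  rw [← key x j, ← key y j, h]

/-- `unop` as an additive equivalence `(End P)ᵐᵒᵖ ≃+ (P ⟶ P)`. -/
def unopEquiv : (End P)ᵐᵒᵖ ≃+ (P ⟶ P) where
  toFun r := r.unop
  invFun f := MulOpposite.op f
  left_inv _ := rfl
  right_inv _ := rfl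
  map_add' _ _ := rfl

/-- The canonical additive map `⊕_J End(Pᵒᵖ) → Hom(P, ∐_J P)`. -/
noncomputable def bmap (J : Type v) [DecidableEq J] [HasCoproduct (fun _ : J => P)] :
    (⨁ _ : J, (End P)ᵐᵒᵖ) →+ (P ⟶ ∐ fun _ : J => P) :=
  (coprodHomMap P (fun _ : J => P)).comp
    (DFinsupp.mapRange.addEquiv (fun _ : J => unopEquiv P)).toAddMonoidHom

lemma bmap_of (J : Type v) [DecidableEq J] [HasCoproduct (fun _ : J => P)]
    (j : J) (r : (End P)ᵐᵒᵖ) :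
    bmap P J (DirectSum.of _ j r) = r.unop ≫ Sigma.ι (fun _ : J => P) j := by
  have h1 : (DFinsupp.mapRange.addEquiv (fun _ : J => unopEquiv P))
      (DirectSum.of _ j r) = DirectSum.of (fun _ : J => (P ⟶ P)) j r.unop := by
    exact DFinsupp.mapRange_single (f := fun _ => unopEquiv P)
      (hf := fun _ => (unopEquiv P).map_zero) (i := j) (b := r)
  simp only [bmap, AddMonoidHom.comp_apply, AddEquiv.toAddMonoidHom_eq_coe,
    AddMonoidHom.coe_coe]
  erw [h1]
  rw [coprodHomMap_of]

lemma bmap_bijective (J : Type v) [DecidableEq J] [HasCoproduct (fun _ : J => P)]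
    (hSS : Function.Bijective (coprodHomMap P (fun _ : J => P))) :
    Function.Bijective (bmap P J) :=
  hSS.comp (DFinsupp.mapRange.addEquiv (fun _ : J => unopEquiv P)).bijective

lemma bmap_smul (J : Type v) [DecidableEq J] [HasCoproduct (fun _ : J => P)]
    (r : (End P)ᵐᵒᵖ) (y : ⨁ _ : J, (End P)ᵐᵒᵖ) :
    bmap P J (r • y) = r.unop ≫ bmap P J y := by
  have E : (bmap P J).comp (DistribMulAction.toAddMonoidHom _ r) =
      (Preadditive.leftComp (∐ fun _ : J => P) r.unop).comp (bmap P J) := by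
    refine DirectSum.addHom_ext (fun j s => ?_)
    have h1 : r • (DirectSum.of (fun _ : J => (End P)ᵐᵒᵖ) j s) =
        DirectSum.of (fun _ : J => (End P)ᵐᵒᵖ) j (r * s) := by
      have := DFinsupp.single_smul (β := fun _ : J => (End P)ᵐᵒᵖ) (i := j) r s
      exact this.symm
    simp only [AddMonoidHom.comp_apply, DistribMulAction.toAddMonoidHom_apply, h1,
      bmap_of, Preadditive.leftComp, AddMonoidHom.mk'_apply]
    have h2 : (r * s).unop = r.unop ≫ s.unop := rfl
    rw [h2, Category.assoc]
  exact DFunLike.congr_fun E y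

end Aux

section Backward

variable [HasCoproducts.{v} C] (P : C)

lemma bmap_comp_linear {X Y : C}
    (φ : (preadditiveCoyonedaObj P).obj X ⟶ (preadditiveCoyonedaObj P).obj Y)
    {I : Type v} [DecidableEq I] (p : (∐ fun _ : I => P) ⟶ X)
    (y : ⨁ _ : I, (End P)ᵐᵒᵖ) :
    bmap P I y ≫ Sigma.desc (fun i => φ (Sigma.ι (fun _ : I => P) i ≫ p)) =
      φ (bmap P I y ≫ p) := by
  induction y using DirectSum.induction_on with
  | zero => rw [map_zero, Limits.zero_comp, Limits.zero_comp]; exact (map_zero φ.hom).symm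
  | of i r =>
      rw [bmap_of, Category.assoc, colimit.ι_desc]
      show r.unop ≫ φ (Sigma.ι (fun _ : I => P) i ≫ p) =
        φ ((r.unop ≫ Sigma.ι (fun _ : I => P) i) ≫ p)
      rw [Category.assoc]
      exact (φ.hom.map_smul r (Sigma.ι (fun _ : I => P) i ≫ p)).symm
  | add a b ha hb =>
      rw [map_add, Preadditive.add_comp, Preadditive.add_comp, ha, hb]; exact (map_add φ.hom _ _).symm

noncomputable def betaL (J : Type v) [DecidableEq J] :
    ModuleCat.of ((End P)ᵐᵒᵖ) (⨁ _ : J, (End P)ᵐᵒᵖ) ⟶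
      (preadditiveCoyonedaObj P).obj (∐ fun _ : J => P) :=
  ModuleCat.ofHom <|
  { toFun := bmap P J
    map_add' := (bmap P J).map_add
    map_smul' := fun r y => by
      rw [RingHom.id_apply, bmap_smul]
      rfl }

lemma betaL_apply (J : Type v) [DecidableEq J] (y : ⨁ _ : J, (End P)ᵐᵒᵖ) :
    betaL P J y = bmap P J y := rfl

lemma gFaithful (hGen : ∀ X : C, ∃ (I : Type v) (p : (∐ fun _ : I => P) ⟶ X), Epi p) :
    (preadditiveCoyonedaObj P).Faithful := by
  refine ⟨fun {X Y} {f g} h => ?_⟩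
  obtain ⟨I, p, hp⟩ := hGen X
  haveI := hp
  have hi : ∀ u : P ⟶ X, u ≫ f = u ≫ g := fun u => congr_arg (fun k => ModuleCat.Hom.hom k u) h
  rw [← cancel_epi p]
  refine colimit.hom_ext fun ⟨i⟩ => ?_
  simp only [← Category.assoc]
  exact hi _

lemma gFull (hP : Projective P)
    (hGen : ∀ X : C, ∃ (I : Type v) (p : (∐ fun _ : I => P) ⟶ X), Epi p)
    (hSS : ∀ (J : Type v) [DecidableEq J],
      Function.Bijective (coprodHomMap P (fun _ : J => P))) :
    (preadditiveCoyonedaObj P).Full := by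
  haveI := hP
  refine ⟨fun {X Y} φ => ?_⟩
  classical
  obtain ⟨I, p, hp⟩ := hGen X
  obtain ⟨J, q, hq⟩ := hGen (kernel p)
  haveI := hp; haveI := hq
  set ft : (∐ fun _ : I => P) ⟶ Y :=
    Sigma.desc (fun i => φ (Sigma.ι (fun _ : I => P) i ≫ p)) with hft
  have key : ∀ y, bmap P I y ≫ ft = φ (bmap P I y ≫ p) :=
    fun y => bmap_comp_linear P φ p y
  have hker : kernel.ι p ≫ ft = 0 := by
    rw [← cancel_epi q, comp_zero]
    refine colimit.hom_ext fun ⟨j⟩ => ?_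
    obtain ⟨y, hy⟩ := (bmap_bijective P I (hSS I)).2
      (Sigma.ι (fun _ : J => P) j ≫ q ≫ kernel.ι p)
    have h0 : (Sigma.ι (fun _ : J => P) j ≫ q ≫ kernel.ι p) ≫ ft = 0 := by
      rw [← hy, key]
      have : bmap P I y ≫ p = 0 := by
        rw [hy]
        simp [Category.assoc, kernel.condition]
      rw [this]; exact map_zero φ.hom
    simpa [Category.assoc] using h0
  refine ⟨Abelian.epiDesc p ft hker, ?_⟩
  refine ModuleCat.hom_ext (LinearMap.ext fun g => ?_)
  obtain ⟨y, hy⟩ := (bmap_bijective P I (hSS I)).2 (Projective.factorThru g p)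
  show g ≫ Abelian.epiDesc p ft hker = φ g
  have hg : g = bmap P I y ≫ p := by rw [hy]; exact (Projective.factorThru_comp _ _).symm
  rw [hg, Category.assoc, Abelian.comp_epiDesc, key]

lemma gEssSurj (hP : Projective P)
    (hGen : ∀ X : C, ∃ (I : Type v) (p : (∐ fun _ : I => P) ⟶ X), Epi p)
    (hSS : ∀ (J : Type v) [DecidableEq J],
      Function.Bijective (coprodHomMap P (fun _ : J => P))) :
    (preadditiveCoyonedaObj P).EssSurj := by
  haveI := hP
  refine ⟨fun M => ?_⟩
  classical
  haveI hco : HasCoproducts.{v} C := inferInstance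
  set π : (⨁ _ : (M : Type v), (End P)ᵐᵒᵖ) →ₗ[(End P)ᵐᵒᵖ] M :=
    DirectSum.toModule _ _ M (fun m => LinearMap.toSpanSingleton _ M m) with hπdef
  have hπ : Function.Surjective π := fun m =>
    ⟨DirectSum.lof ((End P)ᵐᵒᵖ) (M : Type v) (fun _ => (End P)ᵐᵒᵖ) m 1, by
      rw [hπdef, DirectSum.toModule_lof]
      exact LinearMap.toSpanSingleton_apply_one _ _ m⟩
  set K := LinearMap.ker π with hKdef
  set ρ : (⨁ _ : (↥K), (End P)ᵐᵒᵖ) →ₗ[(End P)ᵐᵒᵖ] ↥K :=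
    DirectSum.toModule _ _ _ (fun k => LinearMap.toSpanSingleton _ _ k) with hρdef
  set σ := K.subtype ∘ₗ ρ with hσdef
  have hρ : Function.Surjective ρ := fun k =>
    ⟨DirectSum.lof ((End P)ᵐᵒᵖ) (↥K) (fun _ => (End P)ᵐᵒᵖ) k 1, by
      rw [hρdef, DirectSum.toModule_lof]
      exact LinearMap.toSpanSingleton_apply_one _ _ k⟩
  have hrange : LinearMap.range σ = K := by
    rw [hσdef, LinearMap.range_comp, LinearMap.range_eq_top.2 hρ, Submodule.map_top,
      Submodule.range_subtype]
  set f : (∐ fun _ : (↥K) => P) ⟶ (∐ fun _ : (M : Type v) => P) :=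
    Sigma.desc (fun j => bmap P (M : Type v)
      (σ (DirectSum.lof ((End P)ᵐᵒᵖ) (↥K) (fun _ => (End P)ᵐᵒᵖ) j 1))) with hfdef
  have square : ∀ y, bmap P (↥K) y ≫ f = bmap P (M : Type v) (σ y) := by
    intro y
    induction y using DirectSum.induction_on with
    | zero => rw [map_zero, Limits.zero_comp, map_zero, map_zero]
    | of j r =>
        rw [bmap_of, Category.assoc, hfdef, colimit.ι_desc]
        show r.unop ≫ bmap P (M : Type v)
            (σ (DirectSum.lof ((End P)ᵐᵒᵖ) (↥K) (fun _ => (End P)ᵐᵒᵖ) j 1)) =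
          bmap P (M : Type v) (σ (DirectSum.of (fun _ : (↥K) => (End P)ᵐᵒᵖ) j r))
        rw [← bmap_smul, ← map_smul]
        congr 2
        rw [← map_smul, smul_eq_mul, mul_one]
        exact DirectSum.lof_eq_of _ _ _ _ _
    | add a b ha hb =>
        rw [map_add, Preadditive.add_comp, ha, hb, map_add, map_add]
  set X := cokernel f with hXdef
  set c := cokernel.π f with hcdef
  set ψ : (⨁ _ : (M : Type v), (End P)ᵐᵒᵖ) →ₗ[(End P)ᵐᵒᵖ]
      ((preadditiveCoyonedaObj P).obj X) :=
    (betaL P (M : Type v) ≫ (preadditiveCoyonedaObj P).map c :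
      ModuleCat.of ((End P)ᵐᵒᵖ) (⨁ _ : (M : Type v), (End P)ᵐᵒᵖ) ⟶
        (preadditiveCoyonedaObj P).obj X).hom with hψdef
  have hψapp : ∀ y, ψ y = bmap P (M : Type v) y ≫ c := fun _ => rfl
  have hψ : Function.Surjective ψ := by
    intro g
    obtain ⟨y, hy⟩ := (bmap_bijective P (M : Type v) (hSS _)).2
      (Projective.factorThru (g : P ⟶ X) c)
    refine ⟨y, ?_⟩
    show bmap P (M : Type v) y ≫ c = g
    rw [hy]; exact Projective.factorThru_comp _ _
  have hkψ : LinearMap.ker ψ = K := by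
    refine le_antisymm ?_ ?_
    · intro y hy
      have h0 : bmap P (M : Type v) y ≫ cokernel.π f = 0 := hy
      set g' := kernel.lift (cokernel.π f) (bmap P (M : Type v) y) h0 with hg'def
      set h := Projective.factorThru g' (Abelian.factorThruImage f) with hhdef
      have hf2 : h ≫ f = bmap P (M : Type v) y := by
        conv_lhs => rw [← Abelian.image.fac f]
        rw [← Category.assoc, hhdef, Projective.factorThru_comp, hg'def, kernel.lift_ι]
      obtain ⟨y', hy'⟩ := (bmap_bijective P (↥K) (hSS _)).2 h
      have hσy : σ y' = y := (bmap_bijective P (M : Type v) (hSS _)).1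
        (by rw [← square, hy', hf2])
      rw [← hrange]
      exact ⟨y', hσy⟩
    · intro y hy
      rw [← hrange] at hy
      obtain ⟨y', rfl⟩ := hy
      show bmap P (M : Type v) (σ y') ≫ c = 0
      rw [← square, Category.assoc, hcdef, cokernel.condition, comp_zero]
  have e1 := LinearMap.quotKerEquivOfSurjective π hπ
  have e3 := LinearMap.quotKerEquivOfSurjective ψ hψ
  have e2 := Submodule.quotEquivOfEq (LinearMap.ker π) (LinearMap.ker ψ)
    (by rw [hkψ, hKdef])
  have E : (M : Type v) ≃ₗ[(End P)ᵐᵒᵖ] ((preadditiveCoyonedaObj P).obj X) :=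
    e1.symm.trans (e2.trans e3)
  exact ⟨X, ⟨E.symm.toModuleIso⟩⟩

end Backward

section Forward

variable {R : Type v} [Ring R]

lemma modSurj {J : Type v} [DecidableEq J]
    (g : ModuleCat.of R R ⟶ ∐ fun _ : J => ModuleCat.of R R) :
    ∃ x, coprodHomMap (ModuleCat.of R R) (fun _ : J => ModuleCat.of R R) x = g := by
  set hh := (ModuleCat.coprodIsoDirectSum (fun _ : J => ModuleCat.of R R)).hom with hhh
  set y : ⨁ _ : J, R := hh (g (1 : R)) with hy
  set tss : ∀ _ : J, R → (ModuleCat.of R R ⟶ ModuleCat.of R R) :=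
    fun _ r => ModuleCat.ofHom (LinearMap.toSpanSingleton R R r) with htss
  have tss0 : ∀ j : J, tss j 0 = 0 := fun _ => by
    rw [htss]
    exact congrArg ModuleCat.ofHom (LinearMap.toSpanSingleton_zero R R)
  have tssadd : ∀ (j : J) (a b : R), tss j (a + b) = tss j a + tss j b := fun j a b => by
    rw [htss]
    refine ModuleCat.hom_ext (LinearMap.ext fun s => ?_)
    have : (s : R) • (a + b) = (s : R) • a + (s : R) • b := smul_add _ a b
    exact this
  refine ⟨DFinsupp.mapRange tss tss0 y, ?_⟩
  have claim : ∀ z : ⨁ _ : J, R,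
      (coprodHomMap (ModuleCat.of R R) (fun _ : J => ModuleCat.of R R) (DFinsupp.mapRange tss tss0 z) ≫ hh) (1 : R) = z := by
    intro z
    induction z using DirectSum.induction_on with
    | zero =>
        rw [DFinsupp.mapRange_zero, map_zero, Limits.zero_comp]
        rfl
    | of j r =>
        have h1 : DFinsupp.mapRange tss tss0 (DirectSum.of (fun _ : J => R) j r) =
            DirectSum.of (fun _ : J => (ModuleCat.of R R ⟶ ModuleCat.of R R)) j (tss j r) := DFinsupp.mapRange_single
        rw [h1, coprodHomMap_of, Category.assoc, hhh,
          ModuleCat.ι_coprodIsoDirectSum_hom]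
        show (DirectSum.lof R J (fun _ : J => R) j) ((tss j r) (1 : R)) =
          DirectSum.of (fun _ : J => R) j r
        rw [DirectSum.lof_eq_of]
        congr 1
        exact one_smul _ r
    | add a b ha hb =>
        rw [DFinsupp.mapRange_add tss tss0 tssadd, map_add, Preadditive.add_comp]
        show (coprodHomMap (ModuleCat.of R R) (fun _ : J => ModuleCat.of R R) (DFinsupp.mapRange tss tss0 a) ≫ hh) (1 : R) +
          (coprodHomMap (ModuleCat.of R R) (fun _ : J => ModuleCat.of R R) (DFinsupp.mapRange tss tss0 b) ≫ hh) (1 : R) = a + b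
        rw [ha, hb]
  have hcomp : coprodHomMap (ModuleCat.of R R) (fun _ : J => ModuleCat.of R R) (DFinsupp.mapRange tss tss0 y) ≫ hh
      = g ≫ hh := by
    refine ModuleCat.hom_ext (LinearMap.ext_ring ?_)
    exact (claim y).trans rfl
  exact (cancel_mono hh).1 hcomp

end Forward

lemma fwd [HasCoproducts.{v} C] (R : Type v) [Ring R] (e : C ≌ ModuleCat.{v} R) :
    ∃ P : C, Projective P ∧
      (∀ X : C, ∃ (I : Type v) (p : (∐ fun _ : I => P) ⟶ X), Epi p) ∧
      (∀ (J : Type v) [DecidableEq J],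
        Function.Bijective (coprodHomMap P (fun _ : J => P))) := by
  haveI : PreservesBinaryBiproducts e.inverse :=
    preservesBinaryBiproducts_of_preservesBinaryCoproducts _
  haveI : e.inverse.Additive := Functor.additive_of_preservesBinaryBiproducts _
  refine ⟨e.inverse.obj (ModuleCat.of R R), ?_, ?_, ?_⟩
  · exact (e.symm.map_projective_iff (ModuleCat.of R R)).2
      (ModuleCat.projective_of_free (Module.Basis.singleton PUnit.{v+1} R))
  · intro X
    refine ⟨(e.functor.obj X : Type v), ?_⟩
    set q : (∐ fun _ : (e.functor.obj X : Type v) => ModuleCat.of R R) ⟶ e.functor.obj X :=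
      Sigma.desc (fun m => ModuleCat.ofHom (LinearMap.toSpanSingleton R (e.functor.obj X) m)) with hq
    haveI hqe : Epi q := (ModuleCat.epi_iff_surjective q).2 (fun m => by
      refine ⟨Sigma.ι (fun _ : (e.functor.obj X : Type v) => ModuleCat.of R R) m (1 : R), ?_⟩
      have h1 : q ((Sigma.ι (fun _ : (e.functor.obj X : Type v) => ModuleCat.of R R) m) (1 : R))
          = ((Sigma.ι (fun _ : (e.functor.obj X : Type v) => ModuleCat.of R R) m) ≫ q) (1 : R) :=
        rfl
      rw [h1, hq, Sigma.ι_desc]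
      exact LinearMap.toSpanSingleton_apply_one R (e.functor.obj X) m)
    refine ⟨sigmaComparison e.inverse (fun _ => ModuleCat.of R R) ≫
      e.inverse.map q ≫ e.unitInv.app X, ?_⟩
    haveI h2 : Epi (e.inverse.map q) := e.inverse.map_epi q
    haveI h3 : Epi (e.inverse.map q ≫ e.unitInv.app X) := epi_comp _ _
    exact epi_comp _ _
  · intro J instJ
    refine ⟨coprodHomMap_injective _, ?_⟩
    intro g
    set κ := sigmaComparison e.inverse (fun _ : J => ModuleCat.of R R) with hκ
    obtain ⟨z, hz⟩ := modSurj (e.inverse.preimage (g ≫ κ))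
    set mr : ∀ _ : J, (ModuleCat.of R R ⟶ ModuleCat.of R R) →
        (e.inverse.obj (ModuleCat.of R R) ⟶ e.inverse.obj (ModuleCat.of R R)) :=
      fun _ u => e.inverse.map u with hmr
    have mr0 : ∀ j, mr j 0 = 0 := fun j => e.inverse.map_zero _ _
    have mradd : ∀ (j : J) a b, mr j (a + b) = mr j a + mr j b := fun j a b =>
      e.inverse.map_add
    refine ⟨DFinsupp.mapRange mr mr0 z, ?_⟩
    have claim : ∀ w, coprodHomMap (e.inverse.obj (ModuleCat.of R R))
          (fun _ : J => e.inverse.obj (ModuleCat.of R R)) (DFinsupp.mapRange mr mr0 w) ≫ κ =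
        e.inverse.map (coprodHomMap (ModuleCat.of R R)
          (fun _ : J => ModuleCat.of R R) w) := by
      intro w
      induction w using DirectSum.induction_on with
      | zero =>
          rw [DFinsupp.mapRange_zero, map_zero, Limits.zero_comp, map_zero,
            e.inverse.map_zero]
      | of j u =>
          have h4 : DFinsupp.mapRange mr mr0
              (DirectSum.of (fun _ : J => (ModuleCat.of R R ⟶ ModuleCat.of R R)) j u) =
              DirectSum.of (fun _ : J =>
                (e.inverse.obj (ModuleCat.of R R) ⟶ e.inverse.obj (ModuleCat.of R R))) j
                (mr j u) := DFinsupp.mapRange_single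
          rw [h4, coprodHomMap_of, coprodHomMap_of, Category.assoc, hκ,
            ι_comp_sigmaComparison, hmr, ← e.inverse.map_comp]
      | add a b ha hb =>
          rw [DFinsupp.mapRange_add mr mr0 mradd, map_add, Preadditive.add_comp,
            ha, hb, map_add, e.inverse.map_add]
    have hfin : coprodHomMap (e.inverse.obj (ModuleCat.of R R))
        (fun _ : J => e.inverse.obj (ModuleCat.of R R)) (DFinsupp.mapRange mr mr0 z) ≫ κ =
        g ≫ κ := by
      rw [claim, hz, Functor.map_preimage]
    exact (cancel_mono κ).1 hfin

/-- an AB3 abelian category is equivalent to the category of modules over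
some ring if and only if it has a self-small (compact) projective generator. -/
theorem statement12 (C : Type u) [Category.{v} C] [Abelian C] [HasCoproducts.{v} C] :
    (∃ (R : Type v) (_ : Ring R), Nonempty (C ≌ ModuleCat.{v} R)) ↔
    (∃ P : C, Projective P ∧
      (∀ X : C, ∃ (I : Type v) (p : (∐ fun _ : I => P) ⟶ X), Epi p) ∧
      (∀ (J : Type v) [DecidableEq J],
        Function.Bijective (coprodHomMap P (fun _ : J => P)))) := by
  constructor
  · rintro ⟨R, hR, ⟨e⟩⟩
    exact @fwd C _ _ _ R hR e
  · rintro ⟨P, hP, hGen, hSS⟩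
    haveI := hP
    haveI : (preadditiveCoyonedaObj P).Faithful := gFaithful P hGen
    haveI : (preadditiveCoyonedaObj P).Full := gFull P hP hGen hSS
    haveI : (preadditiveCoyonedaObj P).EssSurj := gEssSurj P hP hGen hSS
    haveI : (preadditiveCoyonedaObj P).IsEquivalence := {}
    exact ⟨(End P)ᵐᵒᵖ, inferInstance, ⟨(preadditiveCoyonedaObj P).asEquivalence⟩⟩


end Paper
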